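/- Let Z be a finite latent space and let p, p' : Z → ℝ be two functions with p(z) > 0 and p'(z) > 0 for all z (representing the complete-data likelihoods z ↦ P(X, z | θ) and z ↦ P(X, z | θ') at two parameter values). Let P = Σ_z p(z) and define the posterior q(z) = p(z)/P. If the EM Q-function does not decrease, i.e. Σ_z q(z)·log p'(z) ≥ Σ_z q(z)·log p(z), then the observed-data likelihood does not decrease: Σ_z p'(z) ≥ Σ_z p(z). (Monotonicity of the EM iteration: each E-step/M-step cycle does not decrease P(W | θ).) -/

import Mathlib

open Finset

/-- Monotonicity of the EM iteration: if `p, p' : Z → ℝ` are positive complete-data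
likelihoods over a finite latent space, `P = Σ_z p z` and `q z = p z / P` is the
posterior, and the EM `Q`-function does not decrease, i.e.
`Σ_z q z·log (p' z) ≥ Σ_z q z·log (p z)`, then the observed-data likelihood does not
decrease: `Σ_z p' z ≥ Σ_z p z`. -/
theorem em_monotonicity
    {Z : Type*} [Fintype Z] (p p' : Z → ℝ)
    (hp : ∀ z, 0 < p z) (hp' : ∀ z, 0 < p' z)
    (hQ : (∑ z, (p z / ∑ z', p z') * Real.log (p z)) ≤
      (∑ z, (p z / ∑ z', p z') * Real.log (p' z))) :
    (∑ z, p z) ≤ ∑ z, p' z := by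
  classical
  cases isEmpty_or_nonempty Z with
  | inl h => simp
  | inr h =>
  set P : ℝ := ∑ z', p z' with hP
  have hPpos : 0 < P := Finset.sum_pos (fun z _ => hp z) univ_nonempty
  set q : Z → ℝ := fun z => p z / P with hq
  have hqpos : ∀ z, 0 < q z := fun z => div_pos (hp z) hPpos
  have hqsum : ∑ z, q z = 1 := by
    simp only [hq]
    rw [← Finset.sum_div, div_self hPpos.ne']
  -- Jensen: ∏ (p'/q)^q ≤ ∑ q * (p'/q) = ∑ p'
  have jensen : (∏ z, (p' z / q z) ^ (q z)) ≤ ∑ z, p' z := by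
    have h1 := Real.geom_mean_le_arith_mean_weighted univ q (fun z => p' z / q z)
      (fun z _ => (hqpos z).le) hqsum (fun z _ => (div_pos (hp' z) (hqpos z)).le)
    calc (∏ z, (p' z / q z) ^ (q z)) ≤ ∑ z, q z * (p' z / q z) := h1
      _ = ∑ z, p' z := by
          refine Finset.sum_congr rfl fun z _ => ?_
          field_simp
          rw [mul_comm, mul_div_assoc, div_self (hqpos z).ne', mul_one]
  have hlog1 : (∑ z, q z * Real.log (p' z / q z)) ≤ Real.log (∑ z, p' z) := by
    have hprodpos : ∀ z ∈ univ, (0:ℝ) < (p' z / q z) ^ (q z) :=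
      fun z _ => Real.rpow_pos_of_pos (div_pos (hp' z) (hqpos z)) _
    calc (∑ z, q z * Real.log (p' z / q z))
        = ∑ z, Real.log ((p' z / q z) ^ (q z)) := by
          refine Finset.sum_congr rfl fun z _ => ?_
          rw [Real.log_rpow (div_pos (hp' z) (hqpos z))]
      _ = Real.log (∏ z, (p' z / q z) ^ (q z)) := by
          rw [Real.log_prod (fun z hz => (hprodpos z hz).ne')]
      _ ≤ Real.log (∑ z, p' z) := by
          exact Real.log_le_log (Finset.prod_pos hprodpos) jensen
  have hlog2 : Real.log P = ∑ z, q z * Real.log (p z / q z) := by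
    have : ∀ z : Z, p z / q z = P := fun z => by
      rw [hq]; field_simp
      exact div_self (hp z).ne'
    simp only [this]
    rw [← Finset.sum_mul, hqsum, one_mul]
  have hsplit : ∀ (f : Z → ℝ), (∀ z, 0 < f z) →
      (∑ z, q z * Real.log (f z / q z)) =
      (∑ z, q z * Real.log (f z)) - ∑ z, q z * Real.log (q z) := by
    intro f hf
    rw [← Finset.sum_sub_distrib]
    refine Finset.sum_congr rfl fun z _ => ?_
    rw [Real.log_div (hf z).ne' (hqpos z).ne']
    ring
  have key : Real.log P ≤ Real.log (∑ z, p' z) := by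
    rw [hlog2, hsplit p hp]
    refine le_trans ?_ hlog1
    rw [hsplit p' hp']
    have : (∑ z, q z * Real.log (p z)) ≤ ∑ z, q z * Real.log (p' z) := hQ
    linarith
  have hP'pos : 0 < ∑ z, p' z := Finset.sum_pos (fun z _ => hp' z) univ_nonempty
  exact (Real.log_le_log_iff hPpos hP'pos).mp key
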